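/- Let α, ε, δ, γ > 0, let A be a real symmetric positive semidefinite N×N matrix with positive semidefinite square root S, and suppose vᵀ A v ≥ γ ‖v‖² for every v in the range of A. Let x, v, x*, v*, g : ℕ → ℝ^N be sequences such that for every t: g_t + S v*_t = 0 and v*_t lies in the range of A, and such that for every t ≥ 1 the contraction ‖(x_t − x*_t, v_t − v*_t)‖_G ≤ (1+δ)^{-1/2} ‖(x_{t-1} − x*_t, v_{t-1} − v*_t)‖_G holds. Define d_t := ‖x*_{t-1} − x*_t‖ + (√(αε)/√γ) ‖g_t − g_{t-1}‖ for t ≥ 1 and suppose d_max ∈ ℝ satisfies d_t ≤ d_max for all t ≥ 1. Then limsup_{t→∞} ‖(x_t − x*_t, v_t − v*_t)‖_G ≤ d_max / (√(1+δ) − 1). -/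

import Mathlib

open Matrix RealInnerProductSpace Filter

/-- The G-norm of a primal-dual pair `(x, v)`: `‖(x,v)‖_G = (‖x‖² + αε‖v‖²)^{1/2}`. -/
noncomputable def GNorm (α ε : ℝ) {N : ℕ} (x v : EuclideanSpace ℝ (Fin N)) : ℝ :=
  Real.sqrt (‖x‖ ^ 2 + α * ε * ‖v‖ ^ 2)

/-- Euclidean triangle inequality in the plane, via complex numbers. -/
lemma sqrt_sq_add_sq_tri (s t s' t' : ℝ) :
    Real.sqrt ((s + s') ^ 2 + (t + t') ^ 2) ≤
      Real.sqrt (s ^ 2 + t ^ 2) + Real.sqrt (s' ^ 2 + t' ^ 2) := by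
  have h := norm_add_le ((s : ℂ) + t * Complex.I) ((s' : ℂ) + t' * Complex.I)
  have he : (↑s + ↑t * Complex.I) + (↑s' + ↑t' * Complex.I)
      = ((s + s' : ℝ) + (t + t' : ℝ) * Complex.I) := by push_cast; ring
  rw [he, Complex.norm_add_mul_I, Complex.norm_add_mul_I, Complex.norm_add_mul_I] at h
  exact h

/-- Monotonicity of `√(s² + t²)` in each nonnegative coordinate. -/
lemma sqrt_sq_add_sq_mono {s t s' t' : ℝ} (hs : 0 ≤ s) (ht : 0 ≤ t)
    (h1 : s ≤ s') (h2 : t ≤ t') :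
    Real.sqrt (s ^ 2 + t ^ 2) ≤ Real.sqrt (s' ^ 2 + t' ^ 2) := by
  apply Real.sqrt_le_sqrt
  nlinarith

/-- Theorem 2 of the paper: under the KKT conditions, the quadratic-form lower bound on
the range of `A = S²`, the per-step contraction with rate `(1+δ)^{-1/2}`, and a uniform
bound `d_max` on the optimality drift `d_t`, the primal-dual G-norm error of dynamic ESOM
satisfies `limsup_{t→∞} ‖u_t − u*_t‖_G ≤ d_max / (√(1+δ) − 1)`. -/
theorem stmt16 {N : ℕ} (α ε δ γ : ℝ) (hα : 0 < α) (hε : 0 < ε) (hδ : 0 < δ) (hγ : 0 < γ)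
    (A S : Matrix (Fin N) (Fin N) ℝ)
    (hA : A.PosSemidef) (hS : S.PosSemidef) (hSS : S * S = A)
    (hquad : ∀ v : EuclideanSpace ℝ (Fin N),
      (∃ w, Matrix.toEuclideanCLM (𝕜 := ℝ) A w = v) →
      γ * ‖v‖ ^ 2 ≤ ⟪v, Matrix.toEuclideanCLM (𝕜 := ℝ) A v⟫)
    (x v xs vs g : ℕ → EuclideanSpace ℝ (Fin N))
    (hkkt : ∀ t, g t + Matrix.toEuclideanCLM (𝕜 := ℝ) S (vs t) = 0)
    (hrange : ∀ t, ∃ u, Matrix.toEuclideanCLM (𝕜 := ℝ) A u = vs t)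
    (hcontr : ∀ t : ℕ, 1 ≤ t →
      GNorm α ε (x t - xs t) (v t - vs t) ≤
        (1 / Real.sqrt (1 + δ)) * GNorm α ε (x (t - 1) - xs t) (v (t - 1) - vs t))
    (dmax : ℝ)
    (hdmax : ∀ t : ℕ, 1 ≤ t →
      ‖xs (t - 1) - xs t‖ +
        (Real.sqrt (α * ε) / Real.sqrt γ) * ‖g t - g (t - 1)‖ ≤ dmax) :
    limsup (fun t : ℕ => GNorm α ε (x t - xs t) (v t - vs t)) atTop ≤
      dmax / (Real.sqrt (1 + δ) - 1) := by
  set T := Matrix.toEuclideanCLM (𝕜 := ℝ) S with hT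
  set TA := Matrix.toEuclideanCLM (𝕜 := ℝ) A with hTA
  have hαε : (0:ℝ) < α * ε := mul_pos hα hε
  have hαεs : (0:ℝ) < Real.sqrt (α * ε) := Real.sqrt_pos.mpr hαε
  have hγs : (0:ℝ) < Real.sqrt γ := Real.sqrt_pos.mpr hγ
  -- the contraction rate
  set q : ℝ := 1 / Real.sqrt (1 + δ) with hq
  have h1δ : (1:ℝ) < Real.sqrt (1 + δ) := by
    have h0 : Real.sqrt 1 < Real.sqrt (1 + δ) := Real.sqrt_lt_sqrt (by norm_num) (by linarith)
    simpa using h0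
  have hq0 : 0 < q := by positivity
  have hq1 : q < 1 := by
    rw [hq, div_lt_one (by linarith)]; exact h1δ
  clear_value q
  -- GNorm basics
  have gnonneg : ∀ (a b : EuclideanSpace ℝ (Fin N)), 0 ≤ GNorm α ε a b :=
    fun a b => Real.sqrt_nonneg _
  have geq : ∀ (a b : EuclideanSpace ℝ (Fin N)),
      GNorm α ε a b = Real.sqrt (‖a‖ ^ 2 + (Real.sqrt (α * ε) * ‖b‖) ^ 2) := by
    intro a b
    rw [GNorm, mul_pow, Real.sq_sqrt hαε.le]
  have gtri : ∀ (a b a' b' : EuclideanSpace ℝ (Fin N)),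
      GNorm α ε (a + a') (b + b') ≤ GNorm α ε a b + GNorm α ε a' b' := by
    intro a b a' b'
    rw [geq, geq, geq]
    calc Real.sqrt (‖a + a'‖ ^ 2 + (Real.sqrt (α * ε) * ‖b + b'‖) ^ 2)
        ≤ Real.sqrt ((‖a‖ + ‖a'‖) ^ 2
            + (Real.sqrt (α * ε) * ‖b‖ + Real.sqrt (α * ε) * ‖b'‖) ^ 2) := by
          apply sqrt_sq_add_sq_mono (norm_nonneg _) (by positivity)
            (norm_add_le _ _)
          rw [← mul_add]
          exact mul_le_mul_of_nonneg_left (norm_add_le _ _) hαεs.le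
      _ ≤ _ := sqrt_sq_add_sq_tri _ _ _ _
  -- self-adjointness of T
  have hTsa : _root_.IsSelfAdjoint T := by
    show star T = T
    rw [hT, ← StarHomClass.map_star]
    congr 1
    exact hS.1
  have hTsym := hTsa.isSymmetric
  -- ‖T w‖² = ⟪w, TA w⟫
  have hTAw : ∀ w : EuclideanSpace ℝ (Fin N), ⟪w, TA w⟫ = ‖T w‖ ^ 2 := by
    intro w
    have h4 : TA = T * T := by rw [hTA, hT, ← _root_.map_mul, hSS]
    rw [h4, ContinuousLinearMap.mul_apply]
    have h3 : ⟪T w, T w⟫ = ⟪w, T (T w)⟫ := hTsym w (T w)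
    rw [← h3, real_inner_self_eq_norm_sq]
  -- √γ ‖w‖ ≤ ‖T w‖ for w in the range of TA
  have hlow : ∀ w : EuclideanSpace ℝ (Fin N), (∃ u, TA u = w) →
      Real.sqrt γ * ‖w‖ ≤ ‖T w‖ := by
    intro w hw
    have h1 := hquad w hw
    rw [hTAw w] at h1
    have h2 : (Real.sqrt γ * ‖w‖) ^ 2 ≤ ‖T w‖ ^ 2 := by
      rw [mul_pow, Real.sq_sqrt hγ.le]; exact h1
    nlinarith [norm_nonneg (T w), mul_nonneg hγs.le (norm_nonneg w), sq_nonneg (‖T w‖ - Real.sqrt γ * ‖w‖), sq_nonneg (‖T w‖ + Real.sqrt γ * ‖w‖)]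
  -- the error sequence
  set e : ℕ → ℝ := fun t => GNorm α ε (x t - xs t) (v t - vs t) with he
  -- one-step recursion: e t ≤ q * (e (t-1) + dmax)
  have hstep : ∀ t : ℕ, 1 ≤ t → e t ≤ q * (e (t - 1) + dmax) := by
    intro t ht
    have h1 := hcontr t ht
    have hsum : x (t-1) - xs t = (x (t-1) - xs (t-1)) + (xs (t-1) - xs t) := by abel
    have hsum' : v (t-1) - vs t = (v (t-1) - vs (t-1)) + (vs (t-1) - vs t) := by abel
    -- drift bound
    have hw : ∃ u, TA u = vs (t-1) - vs t := by
      obtain ⟨u1, hu1⟩ := hrange (t-1)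
      obtain ⟨u2, hu2⟩ := hrange t
      exact ⟨u1 - u2, by rw [map_sub, hu1, hu2]⟩
    have hgdiff : T (vs (t-1) - vs t) = g t - g (t-1) := by
      have h1 := hkkt t
      have h2 := hkkt (t-1)
      have e1 : T (vs t) = -g t := by linear_combination (norm := module) h1
      have e2 : T (vs (t-1)) = -g (t-1) := by linear_combination (norm := module) h2
      rw [map_sub, e1, e2]; abel
    have hvb : Real.sqrt (α * ε) * ‖vs (t-1) - vs t‖ ≤
        (Real.sqrt (α * ε) / Real.sqrt γ) * ‖g t - g (t-1)‖ := by
      have := hlow _ hw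
      rw [hgdiff] at this
      rw [div_mul_eq_mul_div, le_div_iff₀ hγs]
      calc Real.sqrt (α * ε) * ‖vs (t-1) - vs t‖ * Real.sqrt γ
          = Real.sqrt (α * ε) * (Real.sqrt γ * ‖vs (t-1) - vs t‖) := by ring
        _ ≤ Real.sqrt (α * ε) * ‖g t - g (t-1)‖ :=
            mul_le_mul_of_nonneg_left this hαεs.le
    have hdrift : GNorm α ε (xs (t-1) - xs t) (vs (t-1) - vs t) ≤ dmax := by
      calc GNorm α ε (xs (t-1) - xs t) (vs (t-1) - vs t)
          ≤ ‖xs (t-1) - xs t‖ + Real.sqrt (α * ε) * ‖vs (t-1) - vs t‖ := by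
            rw [geq]
            have h0 : Real.sqrt (‖xs (t-1) - xs t‖ ^ 2
                + (Real.sqrt (α * ε) * ‖vs (t-1) - vs t‖) ^ 2) ≤
                Real.sqrt (‖xs (t-1) - xs t‖ ^ 2) +
                Real.sqrt ((Real.sqrt (α * ε) * ‖vs (t-1) - vs t‖) ^ 2) := by
              have := sqrt_sq_add_sq_tri (‖xs (t-1) - xs t‖) 0 0
                (Real.sqrt (α * ε) * ‖vs (t-1) - vs t‖)
              simpa using this
            calc _ ≤ _ := h0
              _ = ‖xs (t-1) - xs t‖ + Real.sqrt (α * ε) * ‖vs (t-1) - vs t‖ := by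
                rw [Real.sqrt_sq (norm_nonneg _), Real.sqrt_sq (by positivity)]
        _ ≤ ‖xs (t-1) - xs t‖ + (Real.sqrt (α * ε) / Real.sqrt γ) * ‖g t - g (t-1)‖ := by
            linarith
        _ ≤ dmax := hdmax t ht
    calc e t ≤ q * GNorm α ε (x (t-1) - xs t) (v (t-1) - vs t) := h1
      _ ≤ q * (e (t-1) + dmax) := by
          apply mul_le_mul_of_nonneg_left _ hq0.le
          rw [hsum, hsum']
          calc GNorm α ε ((x (t-1) - xs (t-1)) + (xs (t-1) - xs t))
                ((v (t-1) - vs (t-1)) + (vs (t-1) - vs t))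
              ≤ e (t-1) + GNorm α ε (xs (t-1) - xs t) (vs (t-1) - vs t) :=
                gtri _ _ _ _
            _ ≤ e (t-1) + dmax := by linarith
  have hdmax0 : 0 ≤ dmax := by
    have := hdmax 1 le_rfl
    have h1 : (0:ℝ) ≤ ‖xs 0 - xs 1‖ + (Real.sqrt (α * ε) / Real.sqrt γ) * ‖g 1 - g 0‖ := by
      positivity
    exact le_trans h1 this
  -- the limit value
  set L : ℝ := q * dmax / (1 - q) with hL
  clear_value L
  have hL0 : 0 ≤ L := by
    rw [hL]; apply div_nonneg (by positivity); linarith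
  have h1q : (1:ℝ) - q ≠ 0 := by linarith
  have hLq : L * (1 - q) = q * dmax := by
    rw [hL]; exact div_mul_cancel₀ _ h1q
  have hLfix : q * (L + dmax) = L := by linear_combination -hLq
  -- geometric bound by induction
  have hgeo : ∀ t : ℕ, e t ≤ q ^ t * e 0 + L := by
    intro t
    induction t with
    | zero => simpa using hL0
    | succ n ih =>
      have h1 := hstep (n+1) (by omega)
      simp only [Nat.add_sub_cancel] at h1
      calc e (n+1) ≤ q * (e n + dmax) := h1
        _ ≤ q * ((q ^ n * e 0 + L) + dmax) := by
            apply mul_le_mul_of_nonneg_left _ hq0.le; linarith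
        _ = q ^ (n+1) * e 0 + q * (L + dmax) := by ring
        _ = q ^ (n+1) * e 0 + L := by rw [hLfix]
  -- pass to limsup
  have htend : Tendsto (fun t : ℕ => q ^ t * e 0 + L) atTop (nhds L) := by
    have h0 : Tendsto (fun t : ℕ => q ^ t) atTop (nhds 0) :=
      tendsto_pow_atTop_nhds_zero_of_lt_one hq0.le hq1
    have := (h0.mul_const (e 0)).add_const L
    simpa using this
  have hlimsup : limsup e atTop ≤ L := by
    have h1 : limsup e atTop ≤ limsup (fun t : ℕ => q ^ t * e 0 + L) atTop := by
      refine limsup_le_limsup (Eventually.of_forall hgeo) ?_ ?_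
      · exact isCoboundedUnder_le_of_le atTop (fun t => gnonneg _ _)
      · exact htend.isBoundedUnder_le
    rw [htend.limsup_eq] at h1
    exact h1
  have hLeq : L = dmax / (Real.sqrt (1 + δ) - 1) := by
    rw [hL, hq]
    have hs : Real.sqrt (1 + δ) ≠ 0 := by linarith
    have hqs : (1 / Real.sqrt (1 + δ)) * Real.sqrt (1 + δ) = 1 := by
      field_simp
    have h1q' : (1:ℝ) - 1 / Real.sqrt (1 + δ) ≠ 0 := by rw [← hq]; exact h1q
    rw [div_eq_div_iff h1q' (by linarith : Real.sqrt (1 + δ) - 1 ≠ 0)]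
    linear_combination dmax * hqs
  rw [← hLeq]
  exact hlimsup
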